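/- Let P be an admissible Poisson algebra such that the center of the associated Lie algebra (P, {,}) is zero. Then P has no nonzero idempotent element. -/
import Mathlib


variable {K : Type*} [Field K] {P : Type*} [AddCommGroup P] [Module K P]

/-- The associator of a bilinear multiplication. -/
def assocOf (m : P →ₗ[K] P →ₗ[K] P) (X Y Z : P) : P := m (m X Y) Z - m X (m Y Z)

/-- Admissible Poisson algebra condition:
`3 A(X,Y,Z) = (X·Z)·Y + (Y·Z)·X - (Y·X)·Z - (Z·X)·Y`. -/
def IsAdmissible (m : P →ₗ[K] P →ₗ[K] P) : Prop :=
  ∀ X Y Z : P, (3 : ℤ) • assocOf m X Y Z =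
    m (m X Z) Y + m (m Y Z) X - m (m Y X) Z - m (m Z X) Y

/-- The antisymmetrized bracket `{X,Y} = (X·Y - Y·X)/2`. -/
def brOf (m : P →ₗ[K] P →ₗ[K] P) (X Y : P) : P := (2 : K)⁻¹ • (m X Y - m Y X)

/-- The symmetrized product `X∙Y = (X·Y + Y·X)/2`. -/
def bulOf (m : P →ₗ[K] P →ₗ[K] P) (X Y : P) : P := (2 : K)⁻¹ • (m X Y + m Y X)

/-- if the center of the associated Lie algebra of an admissible
Poisson algebra is zero, then the algebra has no nonzero idempotent. -/
theorem stmt8 (h2 : (2 : K) ≠ 0) (h3 : (3 : K) ≠ 0)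
    (m : P →ₗ[K] P →ₗ[K] P) (hm : IsAdmissible m)
    (hcenter : ∀ x : P, (∀ y : P, brOf m x y = 0) → x = 0) :
    ∀ e : P, m e e = e → e = 0 := by
  intro e hee
  -- restated admissibility with K-scalar
  have hm' : ∀ X Y Z : P, (3 : K) • (m (m X Y) Z - m X (m Y Z)) =
      m (m X Z) Y + m (m Y Z) X - m (m Y X) Z - m (m Z X) Y := by
    intro X Y Z
    have h := hm X Y Z
    rw [assocOf] at h
    rw [show ((3 : K)) = ((3 : ℤ) : K) by norm_num, Int.cast_smul_eq_zsmul]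
    exact h
  -- associativity-type consequence
  have hA : ∀ X Y Z : P, (3 : K) • (m (m X Y) Z + m (m Y X) Z + m Z (m X Y) + m Z (m Y X)
      - m X (m Y Z) - m X (m Z Y) - m (m Y Z) X - m (m Z Y) X) = 0 := by
    intro X Y Z
    linear_combination (norm := module) hm' X Y Z + hm' X Z Y - hm' Z X Y - hm' Z Y X
  -- Leibniz-type consequence
  have hL : ∀ X Y Z : P, (3 : K) • (m X (m Y Z) + m X (m Z Y) - m (m Y Z) X - m (m Z Y) X
      - m (m X Y) Z + m (m Y X) Z - m Z (m X Y) + m Z (m Y X)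
      - m Y (m X Z) + m Y (m Z X) - m (m X Z) Y + m (m Z X) Y) = 0 := by
    intro X Y Z
    linear_combination (norm := module)
      (-1 : K) • hm' X Y Z - hm' X Z Y + hm' Y X Z - hm' Y Z X + hm' Z X Y - hm' Z Y X
  have h6 : (6 : K) ≠ 0 := by
    have : (6 : K) = 2 * 3 := by norm_num
    rw [this]; exact mul_ne_zero h2 h3
  -- e commutes with everything
  have hcomm : ∀ y : P, m e y = m y e := by
    intro y
    set D : P := m e y - m y e with hD
    -- Step 1 : D = m e D + m D e
    have key1 : D = m e D + m D e := by
      have h := hL y e e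
      rw [hee] at h
      have h0 : (6 : K) • (D - (m e D + m D e)) = 0 := by
        simp only [hD, map_sub, LinearMap.sub_apply]
        linear_combination (norm := module) (-1 : K) • h
      have := (smul_eq_zero.mp h0).resolve_left h6
      rw [sub_eq_zero] at this
      exact this
    -- Step 2 : 6 • (m e D + m D e) = 3 • (m e (m e D + m D e) + m (m e D + m D e) e)
    have key2 : (6 : K) • (m e D + m D e) =
        (3 : K) • (m e (m e D + m D e) + m (m e D + m D e) e) := by
      have h := hA e e D
      rw [hee] at h
      simp only [map_add, LinearMap.add_apply]
      linear_combination (norm := module) h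
    rw [← key1, ← key1] at key2
    -- 6 • D = 3 • D  ⇒ 3 • D = 0 ⇒ D = 0
    have h3D : (3 : K) • D = 0 := by
      linear_combination (norm := module) key2
    have hD0 : D = 0 := (smul_eq_zero.mp h3D).resolve_left h3
    have := sub_eq_zero.mp hD0
    exact this
  -- e is central, hence zero
  apply hcenter e
  intro y
  rw [brOf, hcomm y, sub_self, smul_zero]
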